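/- Under common support, conditionally independent censoring, and correct specification of all nuisance models, the variance of the IPCW-IPS estimator minus the variance of the IPCW-DR estimator equals E_{p(x)}[Var_{π_0(a|x)}[w(x,a)S(x,a,t)]], which is non-negative; hence Var[IPCW-DR] ≤ Var[IPCW-IPS]. -/

import Mathlib

open MeasureTheory Finset

lemma integral_comp_indicator_aux {Ω : Type*} [MeasurableSpace Ω] (μ : Measure Ω)
    [IsProbabilityMeasure μ] {s : Set Ω} (hs : MeasurableSet s) (g : ℝ → ℝ) :
    ∫ ω, g (s.indicator (fun _ => (1:ℝ)) ω) ∂μ = (g 1 - g 0) * (μ s).toReal + g 0 := by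
  have heq : ∀ ω, g (s.indicator (fun _ => (1:ℝ)) ω)
      = s.indicator (fun _ => g 1 - g 0) ω + g 0 := by
    intro ω
    by_cases h : ω ∈ s
    · simp [Set.indicator_of_mem h]
    · simp [Set.indicator_of_notMem h]
  simp_rw [heq]
  rw [integral_add ((integrable_const _).indicator hs) (integrable_const _),
    integral_indicator_const _ hs, integral_const]
  simp [mul_comm]
  exact Or.inl rfl

/-- Variance reduction of IPCW-DR over IPCW-IPS: the difference of variances
equals `E_p[Var_{π0}[w S]] ≥ 0`, hence `Var[IPCW-DR] ≤ Var[IPCW-IPS]`. -/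
theorem ipcw_dr_variance_reduction
    {X A Ω : Type*} [Fintype X] [Fintype A] [MeasurableSpace Ω]
    (p : X → ℝ) (hp : ∀ x, 0 ≤ p x) (hp1 : ∑ x, p x = 1)
    (π0 πe : X → A → ℝ)
    (hπ0 : ∀ x a, 0 ≤ π0 x a) (hπ0s : ∀ x, ∑ a, π0 x a = 1)
    (hπe : ∀ x a, 0 ≤ πe x a) (hπes : ∀ x, ∑ a, πe x a = 1)
    (hsupp : ∀ x a, 0 < πe x a → 0 < π0 x a)
    (μ : X → A → Measure Ω) [∀ x a, IsProbabilityMeasure (μ x a)]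
    (L C : Ω → ℝ) (hL : Measurable L) (hC : Measurable C)
    (hInd : ∀ x a (s u : ℝ), μ x a {ω | s < L ω ∧ u < C ω} =
      μ x a {ω | s < L ω} * μ x a {ω | u < C ω})
    (t : ℝ)
    (S G : X → A → ℝ)
    (hS : ∀ x a, S x a = (μ x a {ω | t < L ω}).toReal)
    (hGdef : ∀ x a, G x a = (μ x a {ω | t < C ω}).toReal)
    (hG : ∀ x a, 0 < G x a)
    (w : X → A → ℝ) (hw : ∀ x a, w x a = πe x a / π0 x a)
    (VarIPS VarDR : ℝ)
    (hIPS : VarIPS =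
      (∑ x, p x * ∑ a, π0 x a *
        ∫ ω, (w x a *
          Set.indicator {ω : Ω | t < min (L ω) (C ω)} (fun _ => (1 : ℝ)) ω / G x a) ^ 2 ∂(μ x a))
      - (∑ x, p x * ∑ a, π0 x a *
          ∫ ω, w x a *
            Set.indicator {ω : Ω | t < min (L ω) (C ω)} (fun _ => (1 : ℝ)) ω / G x a ∂(μ x a)) ^ 2)
    (hDR : VarDR =
      (∑ x, p x * ∑ a, π0 x a *
        ∫ ω, (w x a *
            (Set.indicator {ω : Ω | t < min (L ω) (C ω)} (fun _ => (1 : ℝ)) ω / G x a - S x a)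
          + ∑ a', πe x a' * S x a') ^ 2 ∂(μ x a))
      - (∑ x, p x * ∑ a, π0 x a *
          ∫ ω, (w x a *
              (Set.indicator {ω : Ω | t < min (L ω) (C ω)} (fun _ => (1 : ℝ)) ω / G x a - S x a)
            + ∑ a', πe x a' * S x a') ∂(μ x a)) ^ 2) :
    (VarIPS - VarDR =
        ∑ x, p x *
          ((∑ a, π0 x a * (w x a * S x a) ^ 2) - (∑ a, π0 x a * (w x a * S x a)) ^ 2))
    ∧ 0 ≤ ∑ x, p x *
          ((∑ a, π0 x a * (w x a * S x a) ^ 2) - (∑ a, π0 x a * (w x a * S x a)) ^ 2)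
    ∧ VarDR ≤ VarIPS := by
  classical
  have hmeas : MeasurableSet {ω : Ω | t < min (L ω) (C ω)} :=
    measurableSet_lt measurable_const (hL.min hC)
  have hSG : ∀ x a, (μ x a {ω : Ω | t < min (L ω) (C ω)}).toReal = S x a * G x a := by
    intro x a
    have hset : {ω : Ω | t < min (L ω) (C ω)} = {ω : Ω | t < L ω ∧ t < C ω} := by
      ext ω; simp [lt_min_iff]
    rw [hset, hInd x a t t, ENNReal.toReal_mul, hS, hGdef]
  have hπ0w : ∀ x a, π0 x a * w x a = πe x a := by
    intro x a
    rcases (hπ0 x a).eq_or_lt with h | h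
    · have hπe0 : πe x a = 0 := by
        by_contra hne
        have := hsupp x a (lt_of_le_of_ne (hπe x a) (Ne.symm hne))
        linarith
      rw [hπe0, ← h]; ring
    · rw [hw]; field_simp
  have hGne : ∀ x a, G x a ≠ 0 := fun x a => (hG x a).ne'
  -- closed forms for the four integrals
  have hA : ∀ x a, (∫ ω, w x a *
      Set.indicator {ω : Ω | t < min (L ω) (C ω)} (fun _ => (1 : ℝ)) ω / G x a ∂(μ x a))
      = w x a * S x a := by
    intro x a
    have h := integral_comp_indicator_aux (μ x a) hmeas (fun z => w x a * z / G x a)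
    rw [h, hSG]
    field_simp [hGne x a]
    ring
  have hB : ∀ x a, (∫ ω, (w x a *
      Set.indicator {ω : Ω | t < min (L ω) (C ω)} (fun _ => (1 : ℝ)) ω / G x a) ^ 2 ∂(μ x a))
      = w x a ^ 2 * S x a / G x a := by
    intro x a
    have h := integral_comp_indicator_aux (μ x a) hmeas (fun z => (w x a * z / G x a) ^ 2)
    rw [h, hSG]
    field_simp [hGne x a]
    ring
  have hADR : ∀ x a, (∫ ω, (w x a *
      (Set.indicator {ω : Ω | t < min (L ω) (C ω)} (fun _ => (1 : ℝ)) ω / G x a - S x a)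
      + ∑ a', πe x a' * S x a') ∂(μ x a)) = ∑ a', πe x a' * S x a' := by
    intro x a
    have h := integral_comp_indicator_aux (μ x a) hmeas
      (fun z => w x a * (z / G x a - S x a) + ∑ a', πe x a' * S x a')
    rw [h, hSG]
    field_simp [hGne x a]
    ring
  have hBDR : ∀ x a, (∫ ω, (w x a *
      (Set.indicator {ω : Ω | t < min (L ω) (C ω)} (fun _ => (1 : ℝ)) ω / G x a - S x a)
      + ∑ a', πe x a' * S x a') ^ 2 ∂(μ x a))
      = w x a ^ 2 * S x a / G x a
        + 2 * (w x a * S x a) * ((∑ a', πe x a' * S x a') - w x a * S x a)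
        + ((∑ a', πe x a' * S x a') - w x a * S x a) ^ 2 := by
    intro x a
    have h := integral_comp_indicator_aux (μ x a) hmeas
      (fun z => (w x a * (z / G x a - S x a) + ∑ a', πe x a' * S x a') ^ 2)
    rw [h, hSG]
    field_simp [hGne x a]
    ring
  -- inner mean sums
  have hc : ∀ x, (∑ a, π0 x a * (w x a * S x a)) = ∑ a', πe x a' * S x a' := by
    intro x
    refine Finset.sum_congr rfl fun a _ => ?_
    rw [← mul_assoc, hπ0w]
  -- main variance difference identity
  have hmain : VarIPS - VarDR =
      ∑ x, p x *
        ((∑ a, π0 x a * (w x a * S x a) ^ 2) - (∑ a, π0 x a * (w x a * S x a)) ^ 2) := by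
    rw [hIPS, hDR]
    have e1 : ∀ x, (∑ a, π0 x a *
        ∫ ω, w x a *
          Set.indicator {ω : Ω | t < min (L ω) (C ω)} (fun _ => (1 : ℝ)) ω / G x a ∂(μ x a))
        = ∑ a', πe x a' * S x a' := by
      intro x
      rw [← hc x]
      exact Finset.sum_congr rfl fun a _ => by rw [hA]
    have e2 : ∀ x, (∑ a, π0 x a *
        ∫ ω, (w x a *
            (Set.indicator {ω : Ω | t < min (L ω) (C ω)} (fun _ => (1 : ℝ)) ω / G x a - S x a)
          + ∑ a', πe x a' * S x a') ∂(μ x a)) = ∑ a', πe x a' * S x a' := by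
      intro x
      have : ∀ a : A, a ∈ Finset.univ → π0 x a *
          (∫ ω, (w x a *
            (Set.indicator {ω : Ω | t < min (L ω) (C ω)} (fun _ => (1 : ℝ)) ω / G x a - S x a)
          + ∑ a', πe x a' * S x a') ∂(μ x a)) = π0 x a * ∑ a', πe x a' * S x a' :=
        fun a _ => by rw [hADR]
      rw [Finset.sum_congr rfl this, ← Finset.sum_mul, hπ0s, one_mul]
    simp_rw [e1, e2]
    have key : ∀ x, (∑ a, π0 x a *
        ∫ ω, (w x a *
          Set.indicator {ω : Ω | t < min (L ω) (C ω)} (fun _ => (1 : ℝ)) ω / G x a) ^ 2 ∂(μ x a))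
        - (∑ a, π0 x a *
        ∫ ω, (w x a *
            (Set.indicator {ω : Ω | t < min (L ω) (C ω)} (fun _ => (1 : ℝ)) ω / G x a - S x a)
          + ∑ a', πe x a' * S x a') ^ 2 ∂(μ x a))
        = (∑ a, π0 x a * (w x a * S x a) ^ 2) - (∑ a, π0 x a * (w x a * S x a)) ^ 2 := by
      intro x
      rw [← Finset.sum_sub_distrib]
      have : ∀ a : A, a ∈ Finset.univ →
          (π0 x a *
            ∫ ω, (w x a *
              Set.indicator {ω : Ω | t < min (L ω) (C ω)} (fun _ => (1 : ℝ)) ω / G x a) ^ 2 ∂(μ x a))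
          - (π0 x a *
            ∫ ω, (w x a *
              (Set.indicator {ω : Ω | t < min (L ω) (C ω)} (fun _ => (1 : ℝ)) ω / G x a - S x a)
            + ∑ a', πe x a' * S x a') ^ 2 ∂(μ x a))
          = π0 x a * (w x a * S x a) ^ 2
            - π0 x a * (∑ a', πe x a' * S x a') ^ 2 := by
        intro a _
        rw [hB, hBDR]
        ring
      rw [Finset.sum_congr rfl this, Finset.sum_sub_distrib, ← Finset.sum_mul, hπ0s, one_mul,
        hc x]
    have expand : ∀ x : X,
        (p x * ∑ a, π0 x a *
          ∫ ω, (w x a *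
            Set.indicator {ω : Ω | t < min (L ω) (C ω)} (fun _ => (1 : ℝ)) ω / G x a) ^ 2 ∂(μ x a))
        - (p x * ∑ a, π0 x a *
          ∫ ω, (w x a *
              (Set.indicator {ω : Ω | t < min (L ω) (C ω)} (fun _ => (1 : ℝ)) ω / G x a - S x a)
            + ∑ a', πe x a' * S x a') ^ 2 ∂(μ x a))
        = p x *
          ((∑ a, π0 x a * (w x a * S x a) ^ 2) - (∑ a, π0 x a * (w x a * S x a)) ^ 2) := by
      intro x
      rw [← mul_sub, key x]
    rw [sub_sub_sub_cancel_right, ← Finset.sum_sub_distrib]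
    exact Finset.sum_congr rfl fun x _ => expand x
  have hnn : 0 ≤ ∑ x, p x *
      ((∑ a, π0 x a * (w x a * S x a) ^ 2) - (∑ a, π0 x a * (w x a * S x a)) ^ 2) := by
    refine Finset.sum_nonneg fun x _ => mul_nonneg (hp x) ?_
    have cs := Finset.sum_mul_sq_le_sq_mul_sq Finset.univ
      (fun a => Real.sqrt (π0 x a)) (fun a => Real.sqrt (π0 x a) * (w x a * S x a))
    have h1 : (∑ a, Real.sqrt (π0 x a) * (Real.sqrt (π0 x a) * (w x a * S x a)))
        = ∑ a, π0 x a * (w x a * S x a) := by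
      refine Finset.sum_congr rfl fun a _ => ?_
      rw [← mul_assoc, Real.mul_self_sqrt (hπ0 x a)]
    have h2 : (∑ a, Real.sqrt (π0 x a) ^ 2) = 1 := by
      rw [← hπ0s x]
      exact Finset.sum_congr rfl fun a _ => Real.sq_sqrt (hπ0 x a)
    have h3 : (∑ a, (Real.sqrt (π0 x a) * (w x a * S x a)) ^ 2)
        = ∑ a, π0 x a * (w x a * S x a) ^ 2 := by
      refine Finset.sum_congr rfl fun a _ => ?_
      rw [mul_pow, Real.sq_sqrt (hπ0 x a)]
    rw [h1, h2, h3, one_mul] at cs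
    linarith
  exact ⟨hmain, hnn, by linarith [hmain, hnn]⟩
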